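/- Let K be an algebraically closed field, V a K-vector space, and f : V → V a semisimple linear endomorphism. Suppose (Vₙ)_{n≥0} is a descending chain of subspaces of V with V₀ = V, (f − id)(Vₙ) ⊆ V_{n+1} for all n, and ⋂ₙ Vₙ = 0. Then f = id. -/

import Mathlib

/-- A semisimple injective endomorphism is surjective. -/
lemma aux_semisimple_inj_surj {K V : Type*} [Field K] [AddCommGroup V] [Module K V]
    (g : Module.End K V) (hg : g.IsSemisimple) (hinj : Function.Injective g) :
    Function.Surjective g := by
  have hrange : LinearMap.range g ∈ g.invtSubmodule := by
    intro x hx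
    simp only [Submodule.mem_comap]
    exact LinearMap.mem_range_self g x
  obtain ⟨q, hq, hcompl⟩ := (Module.End.isSemisimple_iff.mp hg) _ hrange
  have hqbot : q = ⊥ := by
    rw [eq_bot_iff]
    intro x hx
    have h1 : g x ∈ q := hq hx
    have h2 : g x ∈ LinearMap.range g := LinearMap.mem_range_self g x
    have : g x = 0 := by
      have := hcompl.disjoint.le_bot ⟨h2, h1⟩
      simpa using this
    have : x = 0 := hinj (by simpa using this)
    simp [this]
  have : LinearMap.range g = ⊤ := by
    have := hcompl.codisjoint.eq_top
    rwa [hqbot, sup_bot_eq] at this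
  exact LinearMap.range_eq_top.mp this

/-- A semisimple endomorphism `f` of a vector space over an algebraically
closed field which is "unipotent" with respect to a descending chain of subspaces
`V = V₀ ⊇ V₁ ⊇ ⋯` (in the sense that `(f − id)(Vₙ) ⊆ Vₙ₊₁`) with `⋂ₙ Vₙ = 0`
is the identity. -/
theorem semisimple_unipotent_eq_id
    (K : Type*) (V : Type*) [Field K] [IsAlgClosed K] [AddCommGroup V] [Module K V]
    (f : Module.End K V) (hf : f.IsSemisimple)
    (Vn : ℕ → Submodule K V)
    (h0 : Vn 0 = ⊤)
    (hdesc : ∀ m, Vn (m + 1) ≤ Vn m)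
    (hstep : ∀ m, ∀ x ∈ Vn m, f x - x ∈ Vn (m + 1))
    (hint : (⨅ m, Vn m) = ⊥) :
    f = LinearMap.id := by
  set g : Module.End K V := f - algebraMap K (Module.End K V) 1 with hg_def
  have hgapp : ∀ x : V, g x = f x - x := by
    intro x; simp [hg_def, Module.algebraMap_end_apply]
  have hg : g.IsSemisimple := (Module.End.isSemisimple_sub_algebraMap_iff).mpr hf
  -- ker g is g-invariant
  have hker : LinearMap.ker g ∈ g.invtSubmodule := by
    intro x hx
    simp only [SetLike.mem_coe, LinearMap.mem_ker] at hx
    simp [Submodule.mem_comap, hx]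
  obtain ⟨q, hq, hcompl⟩ := (Module.End.isSemisimple_iff.mp hg) _ hker
  -- the restriction of g to q
  set g' : Module.End K q := g.restrict hq with hg'_def
  have hg' : g'.IsSemisimple := hg.restrict hq
  have hinj : Function.Injective g' := by
    rw [← LinearMap.ker_eq_bot, eq_bot_iff]
    rintro ⟨x, hx⟩ hker'
    have : g x = 0 := by
      have := congrArg Subtype.val hker'
      exact this
    have hx0 : x = 0 := by
      have : x ∈ LinearMap.ker g ⊓ q := ⟨this, hx⟩
      simpa using hcompl.disjoint.le_bot this
    simp [hx0]
  have hsurj : Function.Surjective g' := aux_semisimple_inj_surj g' hg' hinj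
  -- every element of q lies in every Vn
  have key : ∀ n, ∀ x : q, (x : V) ∈ Vn n := by
    intro n
    induction n with
    | zero => intro x; rw [h0]; trivial
    | succ n ih =>
      intro x
      obtain ⟨y, hy⟩ := hsurj x
      have hyV : (y : V) ∈ Vn n := ih y
      have : (x : V) = g y := by
        rw [← hy]; rfl
      rw [this, hgapp]
      exact hstep n _ hyV
  have hqbot : q = ⊥ := by
    rw [eq_bot_iff]
    intro x hx
    have : x ∈ ⨅ m, Vn m := Submodule.mem_iInf _ |>.mpr fun n => key n ⟨x, hx⟩
    rwa [hint] at this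
  have hkertop : LinearMap.ker g = ⊤ := by
    have := hcompl.codisjoint.eq_top
    rwa [hqbot, sup_bot_eq] at this
  ext x
  have : g x = 0 := by
    have : x ∈ LinearMap.ker g := hkertop ▸ Submodule.mem_top
    simpa using this
  have := hgapp x
  rw [‹g x = 0›] at this
  simp only [LinearMap.id_coe, id_eq]
  exact sub_eq_zero.mp this.symm
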